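/- Let f be holomorphic on a neighborhood of the closed disk of radius R > 0 centered at 0 in ℂ, with f(0) = 1. Define N_f(R) = ∫_0^R n_f(t)/t dt where n_f(t) is the number of zeros of f (with multiplicity) in the open disk of radius t. Then N_f(R) ≤ max_{|λ|=R} ln|f(λ)|. -/

import Mathlib

open Classical in
/-- Multiplicity of a zero of f at z (the order of vanishing of f at z). -/
noncomputable def zeroMult (f : ℂ → ℂ) (z : ℂ) : ℕ :=
  if h : AnalyticAt ℂ f z then (analyticOrderAt f z).toNat else 0

/-- n_f(t): the number of zeros of f (with multiplicity) in the open disk of radius t. -/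
noncomputable def zeroCount (f : ℂ → ℂ) (t : ℝ) : ℝ :=
  ∑' z : {z : ℂ // z ∈ Metric.ball (0 : ℂ) t ∧ f z = 0}, (zeroMult f z : ℝ)

/-- N_f(R) = ∫_0^R n_f(t)/t dt. -/
noncomputable def regZeroCount (f : ℂ → ℂ) (R : ℝ) : ℝ :=
  ∫ t in (0 : ℝ)..R, zeroCount f t / t

open Metric Set MeasureTheory Filter

lemma zeroMult_eq (f : ℂ → ℂ) {z : ℂ} (h : AnalyticAt ℂ f z) :
    zeroMult f z = (analyticOrderAt f z).toNat := by
  rw [zeroMult, dif_pos h]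

lemma zeroMult_of_ne_zero {f : ℂ → ℂ} {z : ℂ} (hf : AnalyticAt ℂ f z) (h : f z ≠ 0) :
    zeroMult f z = 0 := by
  rw [zeroMult_eq f hf]
  have : analyticOrderAt f z = (0 : ℕ) := by
    rw [hf.analyticOrderAt_eq_natCast]
    exact ⟨f, hf, h, by simp⟩
  simp [this]

lemma zeroMult_pos {f : ℂ → ℂ} {z : ℂ} (hf : AnalyticAt ℂ f z) (htop : analyticOrderAt f z ≠ ⊤)
    (h : f z = 0) : 1 ≤ zeroMult f z := by
  rw [zeroMult_eq f hf]
  rcases Nat.eq_zero_or_pos (analyticOrderAt f z).toNat with h0 | h1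
  · exfalso
    have h0' : analyticOrderAt f z = ((0 : ℕ) : ℕ∞) := by
      rw [← h0, ENat.coe_toNat htop]
    rw [hf.analyticOrderAt_eq_natCast] at h0'
    obtain ⟨g, hg, hgz, hev⟩ := h0'
    have heq := hev.self_of_nhds
    rw [sub_self, pow_zero, one_smul] at heq
    exact hgz (by rw [← heq, h])
  · exact h1

lemma order_mul_right {f g : ℂ → ℂ} {z : ℂ} (hf : AnalyticAt ℂ f z) (hg : AnalyticAt ℂ g z)
    (hgz : g z ≠ 0) {n : ℕ} (hn : analyticOrderAt f z = n) :
    analyticOrderAt (f * g) z = n := by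
  rw [(hf.mul hg).analyticOrderAt_eq_natCast]
  rw [hf.analyticOrderAt_eq_natCast] at hn
  obtain ⟨h, hh, hhz, hev⟩ := hn
  refine ⟨fun w => h w * g w, hh.mul hg, mul_ne_zero hhz hgz, ?_⟩
  filter_upwards [hev] with w hw
  simp only [smul_eq_mul] at *
  rw [Pi.mul_apply, hw]; ring

lemma zeroMult_mul_right {f g : ℂ → ℂ} {z : ℂ} (hf : AnalyticAt ℂ f z) (hg : AnalyticAt ℂ g z)
    (hgz : g z ≠ 0) (htop : analyticOrderAt f z ≠ ⊤) :
    zeroMult (fun w => f w * g w) z = zeroMult f z := by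
  show zeroMult (f * g) z = zeroMult f z
  rw [zeroMult_eq f hf, zeroMult_eq _ (hf.mul hg),
    order_mul_right hf hg hgz (ENat.coe_toNat htop).symm]
  simp

lemma zeroMult_sub_mul {f : ℂ → ℂ} {a : ℂ} (hf : AnalyticAt ℂ f a) (htop : analyticOrderAt f a ≠ ⊤) :
    zeroMult (fun w => (w - a) * f w) a = zeroMult f a + 1 := by
  have hsub : AnalyticAt ℂ (fun w : ℂ => w - a) a := analyticAt_id.sub analyticAt_const
  have hprod : AnalyticAt ℂ (fun w => (w - a) * f w) a := hsub.mul hf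
  rw [zeroMult_eq f hf, zeroMult_eq _ hprod]
  have hn : analyticOrderAt f a = ((analyticOrderAt f a).toNat : ℕ∞) := (ENat.coe_toNat htop).symm
  rw [hf.analyticOrderAt_eq_natCast] at hn
  obtain ⟨h, hh, hhz, hev⟩ := hn
  have : analyticOrderAt (fun w => (w - a) * f w) a = (((analyticOrderAt f a).toNat + 1 : ℕ) : ℕ∞) := by
    rw [hprod.analyticOrderAt_eq_natCast]
    refine ⟨h, hh, hhz, ?_⟩
    filter_upwards [hev] with w hw
    simp only [smul_eq_mul] at *
    rw [hw, pow_succ]; ring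
  rw [this, ENat.toNat_coe]

lemma order_ne_top_ball {g : ℂ → ℂ} {r : ℝ} (hg : AnalyticOnNhd ℂ g (ball (0:ℂ) r))
    (h0 : g 0 ≠ 0) {z : ℂ} (hz : z ∈ ball (0:ℂ) r) : analyticOrderAt g z ≠ ⊤ := by
  intro htop
  rw [analyticOrderAt_eq_top] at htop
  exact h0 (hg.eqOn_zero_of_preconnected_of_frequently_eq_zero
    (convex_ball (0:ℂ) r).isPreconnected hz
    ((htop.filter_mono nhdsWithin_le_nhds).frequently)
    (mem_ball_self (pos_of_mem_ball hz)))

lemma finite_zeros {g : ℂ → ℂ} {r r' : ℝ} (hr : 0 < r) (hrr' : r < r')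
    (hg : AnalyticOnNhd ℂ g (ball (0:ℂ) r')) (h0 : g 0 ≠ 0) :
    {z : ℂ | z ∈ closedBall (0:ℂ) r ∧ g z = 0}.Finite := by
  by_contra hinf
  obtain ⟨x, hxK, hx⟩ := Set.Infinite.exists_accPt_of_subset_isCompact hinf (isCompact_closedBall (0:ℂ) r)
    (fun z hz => hz.1)
  have hxB : x ∈ ball (0:ℂ) r' := closedBall_subset_ball hrr' hxK
  have hfreq : ∃ᶠ z in nhdsWithin x {x}ᶜ, g z = 0 := by
    rw [accPt_iff_frequently] at hx
    rw [frequently_nhdsWithin_iff]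
    exact hx.mono fun y hy => ⟨hy.2.2, hy.1⟩
  exact h0 (hg.eqOn_zero_of_preconnected_of_frequently_eq_zero
    (convex_ball (0:ℂ) r').isPreconnected hxB hfreq
    (mem_ball_self (hr.trans hrr')))

lemma log_abs_le_sSup {g : ℂ → ℂ} {R R' : ℝ} (hR : 0 < R) (hRR' : R < R')
    (hg : AnalyticOnNhd ℂ g (ball (0:ℂ) R')) (h0 : g 0 ≠ 0) :
    Real.log (‖g 0‖) ≤
      sSup ((fun z : ℂ => Real.log (‖g z‖)) '' sphere (0:ℂ) R) := by
  have hsubB : closedBall (0:ℂ) R ⊆ ball (0:ℂ) R' := closedBall_subset_ball hRR'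
  have hcont : ContinuousOn g (closedBall (0:ℂ) R) :=
    (hg.mono hsubB).continuousOn
  have hne : (sphere (0:ℂ) R).Nonempty := NormedSpace.sphere_nonempty.mpr hR.le
  have habs : ContinuousOn (fun z => ‖g z‖) (sphere (0:ℂ) R) :=
    continuous_norm.comp_continuousOn (hcont.mono sphere_subset_closedBall)
  obtain ⟨w, hw, hmax⟩ := (isCompact_sphere (0:ℂ) R).exists_isMaxOn hne habs
  have hball : DifferentiableOn ℂ g (ball (0:ℂ) R) :=
    (hg.mono (ball_subset_ball hRR'.le)).differentiableOn
  have hdc : DiffContOnCl ℂ g (ball (0:ℂ) R) :=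
    ⟨hball, by rwa [closure_ball (0:ℂ) hR.ne']⟩
  have hmm : ‖g 0‖ ≤ ‖g w‖ := by
    refine Complex.norm_le_of_forall_mem_frontier_norm_le isBounded_ball hdc ?_ ?_
    · intro z hz
      rw [frontier_ball (0:ℂ) hR.ne'] at hz
      exact hmax hz
    · rw [closure_ball (0:ℂ) hR.ne']
      exact mem_closedBall_self hR.le
  have hgw0 : 0 < ‖g w‖ :=
    lt_of_lt_of_le (norm_pos_iff.mpr h0) hmm
  have hbdd : BddAbove ((fun z : ℂ => Real.log (‖g z‖)) '' sphere (0:ℂ) R) := by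
    refine ⟨max 0 (Real.log (‖g w‖)), ?_⟩
    rintro y ⟨z, hz, rfl⟩
    dsimp only
    rcases eq_or_ne (‖g z‖) 0 with h | h
    · rw [h, Real.log_zero]; exact le_max_left _ _
    · exact le_max_of_le_right (Real.log_le_log (lt_of_le_of_ne (by positivity) (Ne.symm h))
        (hmax hz))
  calc Real.log (‖g 0‖) ≤ Real.log (‖g w‖) :=
        Real.log_le_log (norm_pos_iff.mpr h0) hmm
    _ ≤ _ := le_csSup hbdd ⟨w, hw, rfl⟩


lemma key_ineq {R R' : ℝ} (hR : 0 < R) (hRR' : R < R') :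
    ∀ (n : ℕ) (g : ℂ → ℂ), AnalyticOnNhd ℂ g (ball (0:ℂ) R') → g 0 ≠ 0 →
    ∀ Z : Finset ℂ, (∀ z, z ∈ Z ↔ (‖z‖ < R ∧ g z = 0)) →
    (∑ z ∈ Z, zeroMult g z) = n →
    Real.log (‖g 0‖) +
        ∑ z ∈ Z, (zeroMult g z : ℝ) * Real.log (R / ‖z‖) ≤
      sSup ((fun z : ℂ => Real.log (‖g z‖)) '' sphere (0:ℂ) R) := by
  intro n
  induction n with
  | zero =>
    intro g hg h0 Z hZ hsum
    have hZempty : Z = ∅ := by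
      by_contra hne
      obtain ⟨a, ha⟩ := Finset.nonempty_of_ne_empty hne
      have haR := (hZ a).mp ha
      have haB : a ∈ ball (0:ℂ) R' := mem_ball_zero_iff.mpr
        (by exact haR.1.trans hRR')
      have h1 : 1 ≤ zeroMult g a :=
        zeroMult_pos (hg a haB) (order_ne_top_ball hg h0 haB) haR.2
      have h2 : 1 ≤ ∑ z ∈ Z, zeroMult g z :=
        le_trans h1 (Finset.single_le_sum (fun _ _ => Nat.zero_le _) ha)
      omega
    rw [hZempty]
    simpa using log_abs_le_sSup hR hRR' hg h0
  | succ n ih =>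
    intro g hg h0 Z hZ hsum
    classical
    have hZne : Z.Nonempty := by
      by_contra h
      rw [Finset.not_nonempty_iff_eq_empty] at h
      rw [h] at hsum; simp at hsum
    obtain ⟨a, haZ⟩ := hZne
    obtain ⟨haR, haz⟩ := (hZ a).mp haZ
    have ha0 : a ≠ 0 := fun h => h0 (h ▸ haz)
    have haabs : 0 < ‖a‖ := norm_pos_iff.mpr ha0
    have haB : a ∈ ball (0:ℂ) R' := mem_ball_zero_iff.mpr
      (by exact haR.trans hRR')
    have hRC : (R:ℂ) ≠ 0 := Complex.ofReal_ne_zero.mpr hR.ne'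
    set d : ℂ → ℂ := dslope g a with hd_def
    have hgdiff : DifferentiableOn ℂ g (ball (0:ℂ) R') := hg.differentiableOn
    have hddiff : DifferentiableOn ℂ d (ball (0:ℂ) R') :=
      (Complex.differentiableOn_dslope (isOpen_ball.mem_nhds haB)).mpr hgdiff
    have hd : AnalyticOnNhd ℂ d (ball (0:ℂ) R') := hddiff.analyticOnNhd isOpen_ball
    have hgd : ∀ z, g z = (z - a) * d z := by
      intro z
      have h := sub_smul_dslope g a z
      rw [haz, sub_zero] at h
      rw [← h, smul_eq_mul, hd_def]
    have hd0 : d 0 = (-a)⁻¹ * g 0 := by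
      rw [hd_def, dslope_of_ne g (Ne.symm ha0), slope_def_field, haz, sub_zero, zero_sub,
        div_eq_inv_mul]
    have hd0ne : d 0 ≠ 0 := by
      rw [hd0]
      exact mul_ne_zero (inv_ne_zero (neg_ne_zero.mpr ha0)) h0
    set p : ℂ → ℂ := fun z => ((R:ℂ)^2 - (starRingEnd ℂ) a * z) * (R:ℂ)⁻¹ with hp_def
    have hp : AnalyticOnNhd ℂ p (ball (0:ℂ) R') :=
      (analyticOnNhd_const.sub (analyticOnNhd_const.mul analyticOnNhd_id)).mul analyticOnNhd_const
    have hpne : ∀ z : ℂ, ‖z‖ ≤ R → p z ≠ 0 := by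
      intro z hz hzero
      rw [hp_def] at hzero
      simp only [mul_eq_zero, inv_eq_zero, Complex.ofReal_eq_zero, sub_eq_zero] at hzero
      rcases hzero with h | h
      · have h2 := congrArg (fun x : ℂ => ‖x‖) h
        rw [norm_mul, norm_pow, Complex.norm_real, Real.norm_eq_abs, Complex.norm_conj, abs_of_pos hR] at h2
        nlinarith [norm_nonneg z, norm_nonneg a]
      · exact hR.ne' h
    have hp0 : p 0 = (R:ℂ) := by
      rw [hp_def]
      simp only [mul_zero, sub_zero, sq]
      rw [mul_assoc, mul_inv_cancel₀ hRC, mul_one]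
    set F : ℂ → ℂ := fun z => d z * p z with hF_def
    have hF : AnalyticOnNhd ℂ F (ball (0:ℂ) R') := hd.mul hp
    have hF0eq : F 0 = (-a)⁻¹ * g 0 * (R:ℂ) := by
      show d 0 * p 0 = _
      rw [hd0, hp0]
    have hF0ne : F 0 ≠ 0 := by
      rw [hF0eq]
      exact mul_ne_zero (mul_ne_zero (inv_ne_zero (neg_ne_zero.mpr ha0)) h0) hRC
    have hsph : ∀ z ∈ sphere (0:ℂ) R, ‖F z‖ = ‖g z‖ := by
      intro z hz
      have hzR : ‖z‖ = R := by
        rw [mem_sphere_iff_norm, sub_zero] at hz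
        exact hz
      have hzz : (starRingEnd ℂ) z * z = ((R:ℂ))^2 := by
        rw [mul_comm, Complex.mul_conj, Complex.normSq_eq_norm_sq, hzR]
        push_cast; ring
      have hpz : p z = (starRingEnd ℂ) (z - a) * z * (R:ℂ)⁻¹ := by
        rw [hp_def, map_sub, ← hzz]; ring
      have habsp : ‖p z‖ = ‖z - a‖ := by
        rw [hpz, norm_mul, norm_mul, Complex.norm_conj, norm_inv, Complex.norm_real, Real.norm_eq_abs,
          abs_of_pos hR, hzR]
        field_simp
      show ‖d z * p z‖ = ‖g z‖
      rw [norm_mul, habsp, hgd z, norm_mul]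
      ring
    have himg : (fun z : ℂ => Real.log (‖F z‖)) '' sphere (0:ℂ) R =
        (fun z : ℂ => Real.log (‖g z‖)) '' sphere (0:ℂ) R :=
      Set.image_congr fun z hz => by rw [hsph z hz]
    have hmem : ∀ z ∈ Z, z ∈ ball (0:ℂ) R' := fun z hz =>
      mem_ball_zero_iff.mpr (by exact ((hZ z).mp hz).1.trans hRR')
    have hm_rel : ∀ z ∈ Z, zeroMult g z = zeroMult F z + (if z = a then 1 else 0) := by
      intro z hz
      have hzB := hmem z hz
      have hdz : AnalyticAt ℂ d z := hd z hzB
      have hdtop : analyticOrderAt d z ≠ ⊤ := order_ne_top_ball hd hd0ne hzB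
      have hpz : p z ≠ 0 := hpne z ((hZ z).mp hz).1.le
      have hFz : zeroMult F z = zeroMult d z :=
        zeroMult_mul_right hdz (hp z hzB) hpz hdtop
      by_cases hza : z = a
      · subst hza
        rw [if_pos rfl, hFz]
        have h1 : g = fun w => (w - z) * d w := funext hgd
        rw [h1]
        exact zeroMult_sub_mul hdz hdtop
      · rw [if_neg hza, add_zero, hFz]
        have h1 : g = fun w => d w * (w - a) := funext fun w => (hgd w).trans (mul_comm _ _)
        rw [h1]
        exact zeroMult_mul_right hdz (analyticAt_id.sub analyticAt_const)
          (sub_ne_zero.mpr hza) hdtop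
    set Z' : Finset ℂ := Z.filter (fun z => F z = 0) with hZ'_def
    have hsub' : Z' ⊆ Z := Finset.filter_subset _ _
    have hZ'char : ∀ z, z ∈ Z' ↔ (‖z‖ < R ∧ F z = 0) := by
      intro z
      rw [hZ'_def, Finset.mem_filter, hZ]
      constructor
      · rintro ⟨⟨h1, _⟩, h3⟩; exact ⟨h1, h3⟩
      · rintro ⟨h1, h2⟩
        refine ⟨⟨h1, ?_⟩, h2⟩
        have h2' : d z * p z = 0 := h2
        have hdz0 : d z = 0 := by
          rcases mul_eq_zero.mp h2' with h | h
          · exact h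
          · exact absurd h (hpne z h1.le)
        rw [hgd z, hdz0, mul_zero]
    have hFzero : ∀ z ∈ Z, z ∉ Z' → zeroMult F z = 0 := by
      intro z hz hz'
      have hFne : F z ≠ 0 := by
        intro h
        exact hz' (Finset.mem_filter.mpr ⟨hz, h⟩)
      exact zeroMult_of_ne_zero (hF z (hmem z hz)) hFne
    have e1 : ∑ z ∈ Z, zeroMult g z = (∑ z ∈ Z, zeroMult F z) + 1 := by
      have e := Finset.sum_congr rfl hm_rel
      rw [Finset.sum_add_distrib] at e
      rw [e]
      congr 1
      rw [Finset.sum_ite_eq' Z a (fun _ => 1), if_pos haZ]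
    have hsum1 : ∑ z ∈ Z, zeroMult F z = ∑ z ∈ Z', zeroMult F z :=
      (Finset.sum_subset hsub' (fun z hz hz' => hFzero z hz hz')).symm
    have hsumZ : ∑ z ∈ Z', zeroMult F z = n := by omega
    have e2 : ∑ z ∈ Z, (zeroMult g z : ℝ) * Real.log (R / ‖z‖)
        = (∑ z ∈ Z', (zeroMult F z : ℝ) * Real.log (R / ‖z‖))
          + Real.log (R / ‖a‖) := by
      have hco : ∀ z ∈ Z, (zeroMult g z : ℝ) * Real.log (R / ‖z‖)
          = (zeroMult F z : ℝ) * Real.log (R / ‖z‖)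
            + (if z = a then Real.log (R / ‖a‖) else 0) := by
        intro z hz
        rw [hm_rel z hz]
        push_cast
        by_cases h : z = a
        · subst h; simp; ring
        · simp [h]
      rw [Finset.sum_congr rfl hco, Finset.sum_add_distrib,
        Finset.sum_ite_eq' Z a (fun _ => Real.log (R / ‖a‖)), if_pos haZ]
      congr 1
      refine (Finset.sum_subset hsub' (fun z hz hz' => ?_)).symm
      rw [hFzero z hz hz']
      simp
    have hIH := ih F hF hF0ne Z' hZ'char hsumZ
    have habsF0 : ‖F 0‖ = ‖g 0‖ * (R / ‖a‖) := by
      rw [hF0eq, norm_mul, norm_mul, norm_inv, Complex.norm_real, Real.norm_eq_abs, abs_of_pos hR]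
      rw [show ‖-a‖ = ‖a‖ from norm_neg a]
      field_simp
    have hlogF0 : Real.log (‖F 0‖) = Real.log (‖g 0‖)
        + Real.log (R / ‖a‖) := by
      rw [habsF0, Real.log_mul (norm_ne_zero_iff.mpr h0) (ne_of_gt (div_pos hR haabs))]
    calc Real.log (‖g 0‖) +
        ∑ z ∈ Z, (zeroMult g z : ℝ) * Real.log (R / ‖z‖)
        = Real.log (‖F 0‖) +
          ∑ z ∈ Z', (zeroMult F z : ℝ) * Real.log (R / ‖z‖) := by
          rw [e2, hlogF0]; ring
      _ ≤ sSup ((fun z : ℂ => Real.log (‖F z‖)) '' sphere (0:ℂ) R) := hIH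
      _ = _ := by rw [himg]

/-- Jensen's inequality: if f is holomorphic on a neighborhood of the
closed disk of radius R with f(0) = 1, then N_f(R) ≤ max_{|λ|=R} ln|f(λ)|. -/
theorem stmt_11 (f : ℂ → ℂ) (R : ℝ) (hR : 0 < R) (U : Set ℂ) (hU : IsOpen U)
    (hsub : Metric.closedBall (0 : ℂ) R ⊆ U) (hf : DifferentiableOn ℂ f U)
    (hf0 : f 0 = 1) :
    regZeroCount f R ≤
      sSup ((fun z : ℂ => Real.log (‖f z‖)) '' Metric.sphere (0 : ℂ) R) := by
  classical
  obtain ⟨δ, hδ, hthick⟩ := (isCompact_closedBall (0:ℂ) R).exists_cthickening_subset_open hU hsub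
  set R' : ℝ := R + δ with hR'_def
  have hRR' : R < R' := lt_add_of_pos_right R hδ
  have hcb : closedBall (0:ℂ) R' ⊆ U := by
    rw [hR'_def, add_comm R δ, ← cthickening_closedBall hδ.le hR.le (0:ℂ)]
    exact hthick
  have hA : AnalyticOnNhd ℂ f (ball (0:ℂ) R') :=
    (hf.mono (ball_subset_closedBall.trans hcb)).analyticOnNhd isOpen_ball
  have hf0' : f 0 ≠ 0 := by rw [hf0]; exact one_ne_zero
  have hfin : {z : ℂ | z ∈ closedBall (0:ℂ) R ∧ f z = 0}.Finite :=
    finite_zeros hR hRR' hA hf0'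
  set Zfin : Finset ℂ := hfin.toFinset with hZfin
  set Zb : Finset ℂ := Zfin.filter (fun z => ‖z‖ < R) with hZb
  have hZbchar : ∀ z, z ∈ Zb ↔ (‖z‖ < R ∧ f z = 0) := by
    intro z
    rw [hZb, Finset.mem_filter, hZfin, Set.Finite.mem_toFinset]
    simp only [Set.mem_setOf_eq, mem_closedBall_zero_iff]
    constructor
    · rintro ⟨⟨_, h2⟩, h3⟩; exact ⟨h3, h2⟩
    · rintro ⟨h1, h2⟩; exact ⟨⟨h1.le, h2⟩, h1⟩
  have hzc : ∀ t : ℝ, t ≤ R → zeroCount f t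
      = ∑ z ∈ Zb, (if ‖z‖ < t then (zeroMult f z : ℝ) else 0) := by
    intro t ht
    have h1 : zeroCount f t = ∑' z : ({z : ℂ | z ∈ ball (0:ℂ) t ∧ f z = 0} : Set ℂ),
        (zeroMult f (z : ℂ) : ℝ) := rfl
    have hout : ∀ b ∉ Zb,
        Set.indicator {z : ℂ | z ∈ ball (0:ℂ) t ∧ f z = 0}
          (fun z => (zeroMult f z : ℝ)) b = 0 := by
      intro b hb
      apply Set.indicator_of_notMem
      intro hmem
      apply hb
      rw [hZbchar]
      refine ⟨?_, hmem.2⟩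
      have h2 := hmem.1
      rw [mem_ball_zero_iff] at h2
      exact h2.trans_le ht
    rw [h1, tsum_subtype {z : ℂ | z ∈ ball (0:ℂ) t ∧ f z = 0}
      (fun z => (zeroMult f z : ℝ)), tsum_eq_sum hout]
    refine Finset.sum_congr rfl fun z hz => ?_
    have hfz : f z = 0 := ((hZbchar z).mp hz).2
    by_cases hlt : ‖z‖ < t
    · rw [Set.indicator_of_mem, if_pos hlt]
      exact ⟨mem_ball_zero_iff.mpr (by exact hlt), hfz⟩
    · rw [Set.indicator_of_notMem, if_neg hlt]
      intro hmem
      have h2 := hmem.1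
      rw [mem_ball_zero_iff] at h2
      exact hlt h2
  have habs_pos : ∀ z ∈ Zb, 0 < ‖z‖ := by
    intro z hz
    rcases (hZbchar z).mp hz with ⟨_, hz0⟩
    have hzne : z ≠ 0 := fun h => hf0' (h ▸ hz0)
    exact norm_pos_iff.mpr hzne
  have hint : ∀ z ∈ Zb, IntervalIntegrable
      (fun t => if ‖z‖ < t then (zeroMult f z : ℝ) / t else 0) volume 0 R
      ∧ (∫ t in (0:ℝ)..R, (if ‖z‖ < t then (zeroMult f z : ℝ) / t else 0))
        = (zeroMult f z : ℝ) * Real.log (R / ‖z‖) := by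
    intro z hz
    set r : ℝ := ‖z‖ with hr_def
    set c : ℝ := (zeroMult f z : ℝ) with hc_def
    have hr0 : 0 < r := habs_pos z hz
    have hrR : r < R := ((hZbchar z).mp hz).1
    have h1 : IntervalIntegrable (fun t => if r < t then c / t else 0) volume 0 r := by
      rw [intervalIntegrable_iff, uIoc_of_le hr0.le]
      exact (integrableOn_zero).congr_fun
        (fun t ht => (if_neg (not_lt.mpr ht.2)).symm) measurableSet_Ioc
    have h2 : IntervalIntegrable (fun t => if r < t then c / t else 0) volume r R := by
      rw [intervalIntegrable_iff, uIoc_of_le hrR.le]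
      have hcont : IntegrableOn (fun t => c / t) (Ioc r R) volume := by
        apply (ContinuousOn.integrableOn_Icc ?_).mono_set Ioc_subset_Icc_self
        apply ContinuousOn.div continuousOn_const continuousOn_id
        intro t ht
        exact ne_of_gt (hr0.trans_le ht.1)
      exact hcont.congr_fun (fun t ht => (if_pos ht.1).symm) measurableSet_Ioc
    have hv1 : (∫ t in (0:ℝ)..r, (if r < t then c / t else 0)) = 0 := by
      rw [intervalIntegral.integral_congr (g := fun _ => (0:ℝ)) ?_,
        intervalIntegral.integral_zero]
      intro t ht
      rw [uIcc_of_le hr0.le] at ht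
      exact if_neg (not_lt.mpr ht.2)
    have hv2 : (∫ t in r..R, (if r < t then c / t else 0)) = c * Real.log (R / r) := by
      rw [intervalIntegral.integral_congr_ae (g := fun t => c * t⁻¹) ?_]
      · rw [intervalIntegral.integral_const_mul, integral_inv_of_pos hr0 (hr0.trans hrR)]
      · apply MeasureTheory.ae_of_all
        intro t ht
        rw [uIoc_of_le hrR.le] at ht
        rw [if_pos ht.1, div_eq_mul_inv]
    refine ⟨h1.trans h2, ?_⟩
    rw [← intervalIntegral.integral_add_adjacent_intervals h1 h2, hv1, hv2, zero_add]
  have hreg : regZeroCount f R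
      = ∑ z ∈ Zb, (zeroMult f z : ℝ) * Real.log (R / ‖z‖) := by
    rw [regZeroCount, intervalIntegral.integral_congr
      (g := fun t => ∑ z ∈ Zb, (if ‖z‖ < t then (zeroMult f z : ℝ) / t else 0)) ?_]
    · rw [intervalIntegral.integral_finset_sum (fun z hz => (hint z hz).1)]
      exact Finset.sum_congr rfl fun z hz => (hint z hz).2
    · intro t ht
      rw [uIcc_of_le hR.le] at ht
      show zeroCount f t / t = _
      rw [hzc t ht.2, Finset.sum_div]
      exact Finset.sum_congr rfl fun z hz => by split_ifs <;> simp
  rw [hreg]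
  have hkey := key_ineq hR hRR' (∑ z ∈ Zb, zeroMult f z) f hA hf0' Zb hZbchar rfl
  rw [hf0] at hkey
  simpa using hkey
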